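/- Suppose g: ℝ² → ℝ₊ is a probability density of the form g(x₁,x₂) = h(max(|x₁|,|x₂|)) for some differentiable h: ℝ₊ → ℝ₊ with h(y) → 0 as y → ∞, and g has standard normal marginals. Then g(x₁,x₂) = (1/2)·(1-Φ(max(|x₁|,|x₂|))). -/

import Mathlib

open MeasureTheory Filter

/-- The standard normal CDF. -/
noncomputable def stdNormalCDF (t : ℝ) : ℝ :=
  ∫ s in Set.Iic t, (Real.sqrt (2 * Real.pi))⁻¹ * Real.exp (-s ^ 2 / 2)

noncomputable def phi (x : ℝ) : ℝ := (Real.sqrt (2 * Real.pi))⁻¹ * Real.exp (-x ^ 2 / 2)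

lemma phi_eq (x : ℝ) : phi x = (Real.sqrt (2 * Real.pi))⁻¹ * Real.exp (-(1/2) * x ^ 2) := by
  simp only [phi]; ring_nf

lemma phi_cont : Continuous phi := by
  unfold phi
  fun_prop

lemma phi_pos (x : ℝ) : 0 < phi x := by
  have h2 : (0:ℝ) < Real.sqrt (2 * Real.pi) := Real.sqrt_pos.mpr (by positivity)
  simp only [phi]; positivity

lemma phi_integrable : Integrable phi := by
  have : Integrable (fun x : ℝ => Real.exp (-(1/2) * x ^ 2)) :=
    integrable_exp_neg_mul_sq (by norm_num)
  have := this.const_mul (Real.sqrt (2 * Real.pi))⁻¹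
  refine this.congr ?_
  filter_upwards with x using (phi_eq x).symm

lemma phi_integral : ∫ x, phi x = 1 := by
  have h := integral_gaussian (1/2 : ℝ)
  have h2π : Real.sqrt (2 * Real.pi) ≠ 0 := by positivity
  have : ∫ x, phi x = (Real.sqrt (2 * Real.pi))⁻¹ * ∫ x, Real.exp (-(1/2) * x ^ 2) := by
    rw [← integral_const_mul]
    exact integral_congr_ae (Eventually.of_forall fun x => phi_eq x)
  rw [this, h]
  have : Real.pi / (1/2 : ℝ) = 2 * Real.pi := by ring
  rw [this, inv_mul_cancel₀ h2π]

lemma phi_hasDerivAt (x : ℝ) : HasDerivAt phi (-x * phi x) x := by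
  have h1 : HasDerivAt (fun y : ℝ => -y ^ 2 / 2) (-x) x := by
    have : HasDerivAt (fun y : ℝ => y ^ 2) (2 * x) x := by
      simpa using (hasDerivAt_pow 2 x)
    have := (this.neg.div_const 2)
    exact this.congr_deriv (by ring)
  have h2 : HasDerivAt (fun y : ℝ => Real.exp (-y ^ 2 / 2)) (Real.exp (-x ^ 2 / 2) * (-x)) x :=
    (Real.hasDerivAt_exp _).comp x h1
  have := h2.const_mul (Real.sqrt (2 * Real.pi))⁻¹
  exact this.congr_deriv (by simp only [phi]; ring)

lemma cdf_eq (t : ℝ) : stdNormalCDF t = ∫ s in Set.Iic t, phi s := rfl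

lemma cdf_sub (a b : ℝ) : stdNormalCDF b - stdNormalCDF a = ∫ x in a..b, phi x := by
  rw [cdf_eq, cdf_eq]
  exact intervalIntegral.integral_Iic_sub_Iic phi_integrable.integrableOn phi_integrable.integrableOn

lemma one_sub_cdf (a : ℝ) : 1 - stdNormalCDF a = ∫ x in Set.Ioi a, phi x := by
  have := intervalIntegral.integral_Iic_add_Ioi (b := a) phi_integrable.integrableOn phi_integrable.integrableOn
  rw [phi_integral] at this
  rw [cdf_eq]
  linarith

lemma cdf_continuous : Continuous stdNormalCDF := by
  have h : Continuous fun t => ∫ x in (0:ℝ)..t, phi x :=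
    intervalIntegral.continuous_primitive (fun a b => phi_integrable.intervalIntegrable) 0
  have : stdNormalCDF = fun t => stdNormalCDF 0 + ∫ x in (0:ℝ)..t, phi x := by
    funext t; rw [← cdf_sub]; ring
  rw [this]
  exact continuous_const.add h

theorem square_contour_uniqueness (h : ℝ → ℝ)
    (hnn : ∀ y ≥ (0 : ℝ), 0 ≤ h y)
    (hdiff : DifferentiableOn ℝ h (Set.Ici 0))
    (hlim : Tendsto h atTop (nhds 0))
    (hdens : (∫ x : ℝ × ℝ, h (max |x.1| |x.2|)) = 1)
    (hmarg1 : ∀ x₁ : ℝ, (∫ x₂ : ℝ, h (max |x₁| |x₂|)) =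
      (Real.sqrt (2 * Real.pi))⁻¹ * Real.exp (-x₁ ^ 2 / 2))
    (hmarg2 : ∀ x₂ : ℝ, (∫ x₁ : ℝ, h (max |x₁| |x₂|)) =
      (Real.sqrt (2 * Real.pi))⁻¹ * Real.exp (-x₂ ^ 2 / 2)) :
    ∀ x₁ x₂ : ℝ, h (max |x₁| |x₂|) = (1 / 2) * (1 - stdNormalCDF (max |x₁| |x₂|)) := by
  -- reduce to a statement about all a ≥ 0
  suffices key : ∀ a : ℝ, 0 ≤ a → h a = (1 / 2) * (1 - stdNormalCDF a) by
    intro x₁ x₂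
    exact key _ (le_trans (abs_nonneg x₁) (le_max_left _ _))
  -- differentiability and continuity of h at positive points
  have hdiffAt : ∀ a : ℝ, 0 < a → DifferentiableAt ℝ h a := by
    intro a ha
    exact hdiff.differentiableAt (Ici_mem_nhds ha)
  -- marginals rewritten with phi
  have hmarg : ∀ a : ℝ, (∫ t : ℝ, h (max |a| |t|)) = phi a := fun a => hmarg1 a
  -- Step A: integrability of the slice functions
  have hint : ∀ a : ℝ, Integrable (fun t => h (max |a| |t|)) := by
    intro a
    by_contra hc
    have h0 := hmarg a
    rw [integral_undef hc] at h0
    exact absurd h0.symm (ne_of_gt (phi_pos a))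
  -- Step B: h is integrable on Ioi a for a ≥ 0
  have hIoi : ∀ a : ℝ, 0 ≤ a → IntegrableOn h (Set.Ioi a) := by
    intro a ha
    have h1 : IntegrableOn (fun t => h (max |a| |t|)) (Set.Ioi a) := (hint a).integrableOn
    refine h1.congr_fun ?_ measurableSet_Ioi
    intro t ht
    have ht' : a < t := ht
    show h (max |a| |t|) = h t
    rw [abs_of_nonneg ha, abs_of_nonneg (le_of_lt (lt_of_le_of_lt ha ht')),
      max_eq_right (le_of_lt ht')]
  -- Step C: the functional equation
  set F : ℝ → ℝ := fun a => ∫ t in Set.Ioi a, h t with hF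
  have E : ∀ a : ℝ, 0 ≤ a → 2 * a * h a + 2 * F a = phi a := by
    intro a ha
    have hmaxIoi : Set.EqOn (fun t => h (max |a| |t|)) h (Set.Ioi a) := by
      intro t ht
      have ht' : a < t := ht
      simp only
      rw [abs_of_nonneg ha, abs_of_nonneg (le_of_lt (lt_of_le_of_lt ha ht')),
        max_eq_right (le_of_lt ht')]
    have h1 : (∫ t in Set.Iic a, h (max |a| |t|)) + (∫ t in Set.Ioi a, h (max |a| |t|))
        = phi a := by
      rw [intervalIntegral.integral_Iic_add_Ioi (hint a).integrableOn (hint a).integrableOn]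
      exact hmarg a
    have h2 : (∫ t in Set.Ioi a, h (max |a| |t|)) = F a :=
      setIntegral_congr_fun measurableSet_Ioi hmaxIoi
    -- split Iic a = Iic (-a) ∪ Ioc (-a) a
    have h3 : (∫ t in Set.Iic a, h (max |a| |t|)) =
        (∫ t in Set.Iic (-a), h (max |a| |t|)) + ∫ t in Set.Ioc (-a) a, h (max |a| |t|) := by
      rw [← setIntegral_union (Set.Iic_disjoint_Ioc le_rfl) measurableSet_Ioc
        ((hint a).integrableOn) ((hint a).integrableOn),
        Set.Iic_union_Ioc_eq_Iic (neg_le_self ha)]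
    -- the middle piece is constant
    have h4 : (∫ t in Set.Ioc (-a) a, h (max |a| |t|)) = 2 * a * h a := by
      have : Set.EqOn (fun t => h (max |a| |t|)) (fun _ => h a) (Set.Ioc (-a) a) := by
        intro t ht
        simp only
        rw [abs_of_nonneg ha, max_eq_left (abs_le.mpr ⟨le_of_lt ht.1, ht.2⟩)]
      rw [setIntegral_congr_fun measurableSet_Ioc this, setIntegral_const, Measure.real, Real.volume_Ioc,
        ENNReal.toReal_ofReal (by linarith), smul_eq_mul]
      ring
    -- the left piece equals F a by symmetry
    have h5 : (∫ t in Set.Iic (-a), h (max |a| |t|)) = F a := by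
      have hsymm : (∫ t in Set.Iic (-a), h (max |a| |t|)) =
          ∫ t in Set.Iic (-a), (fun s => h (max |a| |s|)) (-t) := by
        refine setIntegral_congr_fun measurableSet_Iic fun t _ => ?_
        simp [abs_neg]
      have h6 := integral_comp_neg_Iic (-a) (fun s => h (max |a| |s|))
      rw [hsymm, h6, neg_neg, h2]
    rw [h3, h4, h5, h2] at h1
    linarith
  -- Step D: derivative of F at positive points
  have hFderiv : ∀ a : ℝ, 0 < a → HasDerivAt F (-h a) a := by
    intro a ha
    set c : ℝ := a / 2 with hc
    have hc0 : 0 < c := by positivity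
    have hca : c < a := by simp only [hc]; linarith
    have hFeq : ∀ x : ℝ, c ≤ x → F x = F c - ∫ t in c..x, h t := by
      intro x hx
      have hsplit : F c = (∫ t in Set.Ioc c x, h t) + F x := by
        rw [hF]
        simp only
        rw [← setIntegral_union Set.Ioc_disjoint_Ioi_same measurableSet_Ioi
          ((hIoi c (le_of_lt hc0)).mono_set Set.Ioc_subset_Ioi_self)
          ((hIoi c (le_of_lt hc0)).mono_set (Set.Ioi_subset_Ioi hx)),
          Set.Ioc_union_Ioi_eq_Ioi hx]
      rw [intervalIntegral.integral_of_le hx]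
      linarith
    have hprim : HasDerivAt (fun x => ∫ t in c..x, h t) (h a) a := by
      refine intervalIntegral.integral_hasDerivAt_right ?_ ?_ ?_
      · refine ((hIoi 0 le_rfl).mono_set ?_).intervalIntegrable
        intro t ht
        have h1 : min c a ≤ t := ht.1
        rw [min_eq_left hca.le] at h1
        exact lt_of_lt_of_le hc0 h1
      · exact ⟨Set.Ioi 0, Ioi_mem_nhds ha,
          ((hdiff.continuousOn.mono Set.Ioi_subset_Ici_self).aestronglyMeasurable
            measurableSet_Ioi)⟩
      · exact (hdiffAt a ha).continuousAt
    have hev : F =ᶠ[nhds a] fun x => F c - ∫ t in c..x, h t := by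
      filter_upwards [Ioi_mem_nhds hca] with x hx
      exact hFeq x (le_of_lt hx)
    have : HasDerivAt (fun x => F c - ∫ t in c..x, h t) (-h a) a := by
      simpa using (hprim.const_sub (F c))
    exact this.congr_of_eventuallyEq hev
  -- Step E: derivative of h at positive points
  have hderiv : ∀ a : ℝ, 0 < a → HasDerivAt h (-phi a / 2) a := by
    intro a ha
    have hh : HasDerivAt h (deriv h a) a := (hdiffAt a ha).hasDerivAt
    have hLHS : HasDerivAt (fun x => 2 * x * h x + 2 * F x)
        (2 * h a + 2 * a * deriv h a + 2 * (-h a)) a := by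
      have h1 : HasDerivAt (fun x : ℝ => 2 * x) 2 a := by
        simpa using (hasDerivAt_id a).const_mul 2
      have h2 := h1.mul hh
      have h3 := (hFderiv a ha).const_mul 2
      exact h2.add h3
    have hevEq : (fun x => 2 * x * h x + 2 * F x) =ᶠ[nhds a] phi := by
      filter_upwards [Ioi_mem_nhds ha] with x hx
      exact E x (le_of_lt hx)
    have hRHS : HasDerivAt (fun x => 2 * x * h x + 2 * F x) (-a * phi a) a :=
      (phi_hasDerivAt a).congr_of_eventuallyEq hevEq
    have huniq : 2 * h a + 2 * a * deriv h a + 2 * (-h a) = -a * phi a :=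
      hLHS.unique hRHS
    have hda : deriv h a = -phi a / 2 := by
      have ha' : a ≠ 0 := ne_of_gt ha
      field_simp at huniq ⊢
      nlinarith [huniq]
    rw [← hda]
    exact hh
  -- Step F: identify h on positives
  have hpos : ∀ a : ℝ, 0 < a → h a = (1 / 2) * ∫ t in Set.Ioi a, phi t := by
    intro a ha
    have hseq : ∀ b : ℝ, a ≤ b → h b = h a - (1 / 2) * ∫ t in a..b, phi t := by
      intro b hb
      have hFTC : (∫ t in a..b, -phi t / 2) = h b - h a := by
        refine intervalIntegral.integral_eq_sub_of_hasDerivAt ?_ ?_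
        · intro x hx
          have hx1 : a ≤ x := by
            rcases Set.mem_uIcc.mp hx with h1 | h1
            · exact h1.1
            · linarith [h1.1, h1.2]
          exact hderiv x (lt_of_lt_of_le ha hx1)
        · exact ((phi_cont.neg.div_const 2).intervalIntegrable a b)
      have : (∫ t in a..b, -phi t / 2) = -(1/2) * ∫ t in a..b, phi t := by
        rw [← intervalIntegral.integral_const_mul]
        congr 1; funext t; ring
      rw [this] at hFTC
      linarith
    -- take limits as b → ∞
    have hlim1 : Tendsto (fun b => h a - (1 / 2) * ∫ t in a..b, phi t) atTop
        (nhds (h a - (1 / 2) * ∫ t in Set.Ioi a, phi t)) := by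
      have := intervalIntegral_tendsto_integral_Ioi a phi_integrable.integrableOn tendsto_id
      exact tendsto_const_nhds.sub (this.const_mul (1/2))
    have hlim2 : Tendsto (fun b => h a - (1 / 2) * ∫ t in a..b, phi t) atTop (nhds 0) := by
      refine hlim.congr' ?_
      filter_upwards [eventually_ge_atTop a] with b hb
      exact hseq b hb
    have := tendsto_nhds_unique hlim2 hlim1
    linarith
  -- Step G: conclude, including a = 0 by continuity
  intro a ha
  rcases eq_or_lt_of_le ha with rfl | ha'
  · -- a = 0 case by continuity
    have hconth : Tendsto h (nhdsWithin 0 (Set.Ioi 0)) (nhds (h 0)) := by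
      have := (hdiff.continuousOn 0 Set.self_mem_Ici).tendsto
      exact this.mono_left (nhdsWithin_mono 0 Set.Ioi_subset_Ici_self)
    have hcontg : Tendsto (fun a => (1 / 2) * (1 - stdNormalCDF a)) (nhdsWithin 0 (Set.Ioi 0))
        (nhds ((1 / 2) * (1 - stdNormalCDF 0))) := by
      have : Continuous fun a => (1 / 2 : ℝ) * (1 - stdNormalCDF a) :=
        continuous_const.mul (continuous_const.sub cdf_continuous)
      exact (this.tendsto 0).mono_left nhdsWithin_le_nhds
    have hcongr : Tendsto h (nhdsWithin 0 (Set.Ioi 0))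
        (nhds ((1 / 2) * (1 - stdNormalCDF 0))) := by
      refine hcontg.congr' ?_
      filter_upwards [self_mem_nhdsWithin] with x hx
      rw [one_sub_cdf x]
      exact (hpos x hx).symm
    exact tendsto_nhds_unique hconth hcongr
  · rw [hpos a ha', one_sub_cdf a]
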